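/- Let X be a Bernoulli random variable with P(X=1) = min(r,1) for some r ≥ 0, and let Z be a Poisson random variable with mean q, coupled via a common uniform U on [0,1] by X = 1(U > 1 - min(r,1)) and Z = G⁻¹(U; q), where G⁻¹(·;q) is the generalized inverse of the Poisson(q) CDF. Then P(|X - Z| ≥ 1) = |1 - min(r,1) - e^{-q}| + min( min(r,1), e^{-q}(e^{q} - 1 - q) ). -/

import Mathlib

open MeasureTheory

/-- The CDF of a Poisson distribution with mean `q`, evaluated at `m`. -/
noncomputable def poissonCDF (q : ℝ) (m : ℕ) : ℝ :=
  ∑ i ∈ Finset.range (m + 1), Real.exp (-q) * q ^ i / (Nat.factorial i)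

/-- The generalized inverse `G⁻¹(u; q) = inf {m : G(m; q) ≥ u}` of the Poisson CDF. -/
noncomputable def poissonInvCDF (q : ℝ) (u : ℝ) : ℕ :=
  sInf {m : ℕ | u ≤ poissonCDF q m}

lemma hasSum_pois {q : ℝ} (hq : 0 ≤ q) :
    HasSum (fun i : ℕ => Real.exp (-q) * q ^ i / (Nat.factorial i)) 1 := by
  have h := ProbabilityTheory.poissonPMFRealSum q.toNNReal
  simpa [ProbabilityTheory.poissonPMFReal, Real.coe_toNNReal q hq] using h

lemma cdf_mono {q : ℝ} (hq : 0 ≤ q) : Monotone (poissonCDF q) := by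
  intro m n h
  refine Finset.sum_le_sum_of_subset_of_nonneg (Finset.range_subset_range.2 (by omega)) ?_
  intro i _ _; positivity

lemma cdf_le_one {q : ℝ} (hq : 0 ≤ q) (m : ℕ) : poissonCDF q m ≤ 1 :=
  sum_le_hasSum _ (fun i _ => by positivity) (hasSum_pois hq)

lemma cdf0 (q : ℝ) : poissonCDF q 0 = Real.exp (-q) := by simp [poissonCDF]

lemma cdf1 (q : ℝ) : poissonCDF q 1 = Real.exp (-q) * (1 + q) := by
  simp [poissonCDF, Finset.sum_range_succ]; ring

lemma BPC.exists_cdf_le {q u : ℝ} (hq : 0 ≤ q) (hu : u < 1) : ∃ m, u ≤ poissonCDF q m := by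
  have ht := (hasSum_pois hq).tendsto_sum_nat
  have : ∀ᶠ n in Filter.atTop,
      u < ∑ i ∈ Finset.range n, Real.exp (-q) * q ^ i / (Nat.factorial i) :=
    ht.eventually (eventually_gt_nhds hu)
  obtain ⟨n, hn⟩ := this.exists
  exact ⟨n, hn.le.trans (Finset.sum_le_sum_of_subset_of_nonneg
    (Finset.range_subset_range.2 (by omega)) (fun i _ _ => by positivity))⟩

lemma BPC.inv_eq_zero {q u : ℝ} (hu : u ≤ Real.exp (-q)) : poissonInvCDF q u = 0 :=
  Nat.sInf_eq_zero.2 (Or.inl (by simpa [Set.mem_setOf_eq, cdf0] using hu))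

lemma BPC.inv_ne_zero {q u : ℝ} (hq : 0 ≤ q) (hu1 : u < 1) (hu : Real.exp (-q) < u) :
    poissonInvCDF q u ≠ 0 := by
  obtain ⟨m, hm⟩ := BPC.exists_cdf_le hq hu1
  have hmem : u ≤ poissonCDF q (poissonInvCDF q u) :=
    Nat.sInf_mem (⟨m, hm⟩ : Set.Nonempty {m : ℕ | u ≤ poissonCDF q m})
  intro h
  rw [h, cdf0] at hmem
  linarith

lemma BPC.inv_le_one {q u : ℝ} (hu : u ≤ Real.exp (-q) * (1 + q)) : poissonInvCDF q u ≤ 1 :=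
  Nat.sInf_le (by simpa [Set.mem_setOf_eq, cdf1] using hu)

lemma BPC.two_le_inv {q u : ℝ} (hq : 0 ≤ q) (hu1 : u < 1) (hu : Real.exp (-q) * (1 + q) < u) :
    2 ≤ poissonInvCDF q u := by
  obtain ⟨m, hm⟩ := BPC.exists_cdf_le hq hu1
  have hmem : u ≤ poissonCDF q (poissonInvCDF q u) :=
    Nat.sInf_mem (⟨m, hm⟩ : Set.Nonempty {m : ℕ | u ≤ poissonCDF q m})
  by_contra h
  push_neg at h
  have h2 : poissonCDF q (poissonInvCDF q u) ≤ poissonCDF q 1 := cdf_mono hq (by omega)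
  rw [cdf1] at h2
  linarith

theorem bernoulli_poisson_coupling_eq (r q : ℝ) (hr : 0 ≤ r) (hq : 0 ≤ q) :
    (volume.restrict (Set.Icc (0 : ℝ) 1))
      {u : ℝ | 1 ≤ |(if 1 - min r 1 < u then (1 : ℝ) else 0) - (poissonInvCDF q u : ℝ)|}
    = ENNReal.ofReal
        (|1 - min r 1 - Real.exp (-q)|
          + min (min r 1) (Real.exp (-q) * (Real.exp q - 1 - q))) := by
  set p : ℝ := min r 1 with hp
  set t : ℝ := 1 - p with htdef
  set a : ℝ := Real.exp (-q) with hadef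
  set b : ℝ := Real.exp (-q) * (1 + q) with hbdef
  have hp0 : 0 ≤ p := le_min hr zero_le_one
  have hp1 : p ≤ 1 := min_le_right r 1
  have ht0 : 0 ≤ t := by simp [htdef]; linarith
  have ht1 : t ≤ 1 := by simp [htdef]; linarith
  have ha0 : 0 < a := Real.exp_pos _
  have ha1 : a ≤ 1 := Real.exp_le_one_iff.mpr (by linarith)
  have hab : a ≤ b := by
    rw [hbdef, hadef]
    nlinarith [Real.exp_pos (-q)]
  have hb1 : b ≤ 1 := by
    have := cdf_le_one hq 1
    rwa [cdf1] at this
  set E : Set ℝ :=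
    {u : ℝ | 1 ≤ |(if 1 - min r 1 < u then (1 : ℝ) else 0) - (poissonInvCDF q u : ℝ)|} with hE
  set S : Set ℝ := Set.Ioc (min a t) (max a t) ∪ Set.Ioc (max t b) 1 with hS
  have key : ∀ u : ℝ, u ≠ 1 → (u ∈ E ∩ Set.Icc (0:ℝ) 1 ↔ u ∈ S) := by
    intro u hne
    constructor
    · rintro ⟨huE, hu0, hu1'⟩
      have hu1 : u < 1 := lt_of_le_of_ne hu1' hne
      simp only [hE, Set.mem_setOf_eq] at huE
      by_cases hua : u ≤ a
      · -- Z = 0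
        have hZ : poissonInvCDF q u = 0 := BPC.inv_eq_zero hua
        rw [hZ] at huE
        by_cases hut : t < u
        · -- X = 1, Z = 0 : in E; u ∈ (min a t, max a t]
          left
          exact ⟨lt_of_le_of_lt (min_le_right a t) hut, le_trans hua (le_max_left a t)⟩
        · -- X = 0, Z = 0 : |0| = 0, contradiction
          simp [show ¬ (1 - min r 1 < u) from hut] at huE; linarith
      · push_neg at hua
        by_cases hub : u ≤ b
        · -- Z = 1
          have hZ1 : poissonInvCDF q u ≤ 1 := BPC.inv_le_one hub
          have hZ0 : poissonInvCDF q u ≠ 0 := BPC.inv_ne_zero hq hu1 hua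
          have hZ : poissonInvCDF q u = 1 := by omega
          rw [hZ] at huE
          by_cases hut : t < u
          · -- X = 1, Z = 1 : contradiction
            simp [show (1 - min r 1 < u) from hut] at huE; linarith
          · -- X = 0, Z = 1 : in E; a < u ≤ t
            push_neg at hut
            left
            exact ⟨lt_of_le_of_lt (min_le_left a t) hua, le_trans hut (le_max_right a t)⟩
        · push_neg at hub
          by_cases hut : t < u
          · right
            exact ⟨max_lt hut hub, hu1'⟩
          · push_neg at hut
            left
            refine ⟨lt_of_le_of_lt (min_le_left a t) hua, ?_⟩
            exact le_trans hut (le_max_right a t)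
    · intro huS
      have hu01 : u ∈ Set.Icc (0:ℝ) 1 := by
        rcases huS with h | h
        · constructor
          · have : 0 ≤ min a t := le_min ha0.le ht0
            linarith [h.1]
          · calc u ≤ max a t := h.2
              _ ≤ 1 := max_le ha1 ht1
        · exact ⟨le_trans (le_max_of_le_left ht0) h.1.le, h.2⟩
      refine ⟨?_, hu01⟩
      have hu1 : u < 1 := lt_of_le_of_ne hu01.2 hne
      simp only [hE, Set.mem_setOf_eq]
      rcases huS with h | h
      · -- (min a t, max a t] : X ≠ Z-ish. Cases on t ≤ a or a ≤ t
        by_cases hua : u ≤ a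
        · -- then Z = 0 and t < u (since u > min a t and u ≤ a means min = t side)
          have hZ : poissonInvCDF q u = 0 := BPC.inv_eq_zero hua
          have hut : t < u := by
            rcases le_or_gt u t with h' | h'
            · exfalso
              have : u ≤ min a t := le_min hua h'
              linarith [h.1]
            · exact h'
          rw [hZ]
          simp [show (1 - min r 1 < u) from hut]
        · push_neg at hua
          have hut : u ≤ t := by
            rcases le_or_gt u t with h' | h'
            · exact h'
            · exfalso
              have : max a t < u := max_lt hua h'
              linarith [h.2]
          -- X = 0, Z ≥ 1
          have hX : ¬ (1 - p < u) := by simp [htdef] at hut ⊢; linarith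
          rw [if_neg hX]
          have hZ0 : poissonInvCDF q u ≠ 0 := BPC.inv_ne_zero hq hu1 hua
          have : (1:ℝ) ≤ (poissonInvCDF q u : ℝ) := by
            exact_mod_cast Nat.one_le_iff_ne_zero.mpr hZ0
          rw [abs_sub_comm]
          rw [abs_of_nonneg (by linarith)]
          linarith
      · -- (max t b, 1] : X = 1, Z ≥ 2
        have hut : t < u := lt_of_le_of_lt (le_max_left t b) h.1
        have hub : b < u := lt_of_le_of_lt (le_max_right t b) h.1
        have hZ2 : 2 ≤ poissonInvCDF q u := BPC.two_le_inv hq hu1 hub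
        have hZ2' : (2:ℝ) ≤ (poissonInvCDF q u : ℝ) := by exact_mod_cast hZ2
        have hX : (1 - p < u) := by rw [htdef] at hut; exact hut
        rw [if_pos hX, abs_sub_comm, abs_of_nonneg (by linarith)]
        linarith
  -- now measure computation
  rw [Measure.restrict_apply' measurableSet_Icc]
  have hae : (E ∩ Set.Icc (0:ℝ) 1 : Set ℝ) =ᵐ[volume] S := by
    rw [Filter.eventuallyEq_set]
    have h1 : {u : ℝ | u ≠ 1} ∈ ae volume := by
      rw [mem_ae_iff]
      have : {u : ℝ | u ≠ 1}ᶜ = {1} := by ext x; simp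
      rw [this]
      exact Real.volume_singleton
    filter_upwards [h1] with u hu using key u hu
  rw [measure_congr hae, hS]
  have hmaxle : max a t ≤ max t b := max_le (le_trans hab (le_max_right t b)) (le_max_left t b)
  have hdisj : Disjoint (Set.Ioc (min a t) (max a t)) (Set.Ioc (max t b) (1:ℝ)) := by
    rw [Set.disjoint_left]
    rintro x ⟨_, hx2⟩ ⟨hx3, _⟩
    linarith
  rw [measure_union hdisj measurableSet_Ioc, Real.volume_Ioc, Real.volume_Ioc,
    ← ENNReal.ofReal_add (by linarith [min_le_max (a := a) (b := t)])
      (by linarith [max_le ht1 hb1])]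
  congr 1
  have h1 : max a t - min a t = |t - a| := by
    rw [max_sub_min_eq_abs, abs_sub_comm]
  have h2 : (1:ℝ) - max t b = min (1 - t) (1 - b) := by
    rcases max_cases t b with ⟨h', h''⟩ | ⟨h', h''⟩
    · rw [h', min_eq_left (by linarith)]
    · rw [h', min_eq_right (by linarith)]
  have h3 : (1:ℝ) - b = a * (Real.exp q - 1 - q) := by
    have hexp : Real.exp (-q) * Real.exp q = 1 := by
      rw [← Real.exp_add]; simp
    rw [hbdef, hadef]; nlinarith
  rw [h1, h2, h3]
  have h4 : (1:ℝ) - t = p := by rw [htdef]; ring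
  rw [h4, htdef]
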